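/- Let Ω be a locally compact Hausdorff space, Γ a nondegenerate Banach module over C₀(Ω), and K = Ω ∪ {∞} the one-point compactification of Ω. If f is a continuous 𝕜-valued function on K and g ∈ C₀(Ω) is the function given by g(x) = f(x) − f(∞) for all x ∈ Ω, then for every s ∈ Γ one has ‖g•s + f(∞)·s‖ ≤ ‖f‖_∞ · ‖s‖, where ‖f‖_∞ is the supremum norm of f on K. (Consequently the formula (f, s) ↦ g•s + f(∞)·s turns Γ into a unitary Banach module over C(K).) -/
import Mathlib


open scoped ZeroAtInfty OnePoint

noncomputable section

variable {𝕜 : Type*} [RCLike 𝕜] {Ω : Type*} [TopologicalSpace Ω]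

/-- A Banach module structure over `C₀(Ω, 𝕜)` on a `𝕜`-Banach space `Γ`. -/
structure C0Module (𝕜 : Type*) [RCLike 𝕜] (Ω : Type*) [TopologicalSpace Ω]
    (Γ : Type*) [NormedAddCommGroup Γ] [NormedSpace 𝕜 Γ] where
  smul : C₀(Ω, 𝕜) →L[𝕜] Γ →L[𝕜] Γ
  mul_smul : ∀ (f g : C₀(Ω, 𝕜)) (s : Γ), smul (f * g) s = smul f (smul g s)
  norm_smul_le : ∀ (f : C₀(Ω, 𝕜)) (s : Γ), ‖smul f s‖ ≤ ‖f‖ * ‖s‖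

variable {Γ : Type*} [NormedAddCommGroup Γ] [NormedSpace 𝕜 Γ]

/-- Nondegeneracy of a Banach module over `C₀(Ω, 𝕜)`. -/
def C0Module.Nondegenerate (M : C0Module 𝕜 Ω Γ) : Prop :=
  Dense (Submodule.span 𝕜 {x : Γ | ∃ (f : C₀(Ω, 𝕜)) (s : Γ), M.smul f s = x} : Set Γ)

/-- Norm bound from a pointwise bound on a `C₀` function. -/
lemma c0_norm_le_of_forall {h : C₀(Ω, 𝕜)} {C : ℝ} (hC : 0 ≤ C) (H : ∀ x, ‖h x‖ ≤ C) :
    ‖h‖ ≤ C := by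
  rw [← ZeroAtInftyContinuousMap.norm_toBCF_eq_norm]
  exact (BoundedContinuousFunction.norm_le hC).mpr H

lemma c0_norm_apply_le (h : C₀(Ω, 𝕜)) (x : Ω) : ‖h x‖ ≤ ‖h‖ := by
  rw [← ZeroAtInftyContinuousMap.norm_toBCF_eq_norm]
  exact BoundedContinuousFunction.norm_coe_le_norm h.toBCF x

/-- Urysohn-type function in `C₀(Ω, 𝕜)` which is `1` on a compact set and has norm at most 1. -/
lemma exists_c0_one_on_compact [LocallyCompactSpace Ω] [T2Space Ω]
    {Kc : Set Ω} (hKc : IsCompact Kc) :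
    ∃ e : C₀(Ω, 𝕜), ‖e‖ ≤ 1 ∧ ∀ x ∈ Kc, e x = 1 := by
  obtain ⟨φ, hφ1, -, hφsupp, hφ01⟩ :=
    exists_continuous_one_zero_of_isCompact hKc isClosed_empty (Set.disjoint_empty _)
  refine ⟨⟨⟨fun x => (φ x : 𝕜), RCLike.continuous_ofReal.comp φ.continuous⟩, ?_⟩, ?_, ?_⟩
  · have : HasCompactSupport (fun x => ((φ x : ℝ) : 𝕜)) := by
      apply hφsupp.comp_left (g := fun r : ℝ => (r : 𝕜))
      simp
    exact this.is_zero_at_infty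
  · apply c0_norm_le_of_forall zero_le_one
    intro x
    simp only [ZeroAtInftyContinuousMap.coe_mk, ContinuousMap.coe_mk]
    rw [RCLike.norm_ofReal, abs_le]
    exact ⟨by linarith [(hφ01 x).1], (hφ01 x).2⟩
  · intro x hx
    simp only [ZeroAtInftyContinuousMap.coe_mk, ContinuousMap.coe_mk]
    rw [hφ1 hx]
    simp

/-- Extension of the module structure of a nondegenerate Banach module over
`C₀(Ω)` to the one-point compactification `K = Ω ∪ {∞}`: for a continuous function `f` on `K`
and `g ∈ C₀(Ω)` given by `g x = f x - f ∞`, one has `‖g • s + f(∞) • s‖ ≤ ‖f‖ ⬝ ‖s‖`. -/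
theorem onePoint_module_norm_le
    [LocallyCompactSpace Ω] [T2Space Ω] [CompleteSpace Γ]
    (M : C0Module 𝕜 Ω Γ) (hM : M.Nondegenerate)
    (f : C(OnePoint Ω, 𝕜)) (g : C₀(Ω, 𝕜))
    (hg : ∀ x : Ω, g x = f (x : OnePoint Ω) - f ∞) (s : Γ) :
    ‖M.smul g s + f ∞ • s‖ ≤ ‖f‖ * ‖s‖ := by
  classical
  set c : 𝕜 := f ∞ with hc
  -- Step 1: approximate identity on elements of the span.
  have step1 : ∀ u ∈ Submodule.span 𝕜 {x : Γ | ∃ (h : C₀(Ω, 𝕜)) (t : Γ), M.smul h t = x},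
      ∀ ε > 0, ∃ Kc : Set Ω, IsCompact Kc ∧ ∀ e : C₀(Ω, 𝕜), ‖e‖ ≤ 1 →
        (∀ x ∈ Kc, e x = 1) → ‖M.smul e u - u‖ ≤ ε := by
    intro u hu
    induction hu using Submodule.span_induction with
    | mem x hx =>
      obtain ⟨h, t, rfl⟩ := hx
      intro ε hε
      set δ : ℝ := ε / (2 * (‖t‖ + 1)) with hδ
      have hδpos : 0 < δ := by positivity
      have hcc : ∀ᶠ x in Filter.cocompact Ω, ‖h x‖ ≤ δ := by
        have := Metric.tendsto_nhds.mp (ZeroAtInftyContinuousMap.zero_at_infty' h) δ hδpos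
        filter_upwards [this] with x hx
        rw [dist_zero_right] at hx
        exact hx.le
      obtain ⟨Kc, hKcc, hKcs⟩ := Filter.mem_cocompact'.mp hcc
      refine ⟨Kc, hKcc, fun e he h1 => ?_⟩
      have key : M.smul e (M.smul h t) - M.smul h t = M.smul (e * h - h) t := by
        rw [map_sub M.smul, ContinuousLinearMap.sub_apply, M.mul_smul]
      rw [key]
      have hnorm : ‖e * h - h‖ ≤ 2 * δ := by
        apply c0_norm_le_of_forall (by positivity)
        intro x
        have hval : (e * h - h) x = (e x - 1) * h x := by
          simp [ZeroAtInftyContinuousMap.coe_sub, ZeroAtInftyContinuousMap.coe_mul, sub_mul]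
        rw [hval]
        by_cases hx : x ∈ Kc
        · rw [h1 x hx, sub_self, zero_mul, norm_zero]; positivity
        · have hhx : ‖h x‖ ≤ δ := by
            by_contra hcon
            exact hx (hKcs (by simpa using hcon))
          have hex : ‖e x - 1‖ ≤ 2 := by
            calc ‖e x - 1‖ ≤ ‖e x‖ + ‖(1 : 𝕜)‖ := norm_sub_le _ _
            _ ≤ 1 + 1 := by
                have := (c0_norm_apply_le e x).trans he
                simp [this]
            _ = 2 := by norm_num
          calc ‖(e x - 1) * h x‖ = ‖e x - 1‖ * ‖h x‖ := norm_mul _ _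
          _ ≤ 2 * δ := by
              apply mul_le_mul hex hhx (norm_nonneg _) (by norm_num)
      calc ‖M.smul (e * h - h) t‖ ≤ ‖e * h - h‖ * ‖t‖ := M.norm_smul_le _ _
      _ ≤ 2 * δ * ‖t‖ := by
          apply mul_le_mul_of_nonneg_right hnorm (norm_nonneg _)
      _ ≤ ε := by
          rw [hδ]
          have hb : (0:ℝ) < 2 * (‖t‖ + 1) := by positivity
          calc 2 * (ε / (2 * (‖t‖ + 1))) * ‖t‖ = ε * (2 * ‖t‖) / (2 * (‖t‖ + 1)) := by ring
          _ ≤ ε := by rw [div_le_iff₀ hb]; nlinarith [norm_nonneg t, hε.le]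
    | zero =>
      intro ε hε
      exact ⟨∅, isCompact_empty, fun e _ _ => by simp [hε.le]⟩
    | add x y hx hy ihx ihy =>
      intro ε hε
      obtain ⟨K1, hK1, h1⟩ := ihx (ε / 2) (by positivity)
      obtain ⟨K2, hK2, h2⟩ := ihy (ε / 2) (by positivity)
      refine ⟨K1 ∪ K2, hK1.union hK2, fun e he hone => ?_⟩
      have e1 := h1 e he (fun x hx => hone x (Or.inl hx))
      have e2 := h2 e he (fun x hx => hone x (Or.inr hx))
      have : M.smul e (x + y) - (x + y) = (M.smul e x - x) + (M.smul e y - y) := by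
        rw [map_add]; abel
      rw [this]
      calc ‖(M.smul e x - x) + (M.smul e y - y)‖ ≤ ‖M.smul e x - x‖ + ‖M.smul e y - y‖ :=
            norm_add_le _ _
      _ ≤ ε / 2 + ε / 2 := add_le_add e1 e2
      _ = ε := by ring
    | smul a x hx ihx =>
      intro ε hε
      obtain ⟨K1, hK1, h1⟩ := ihx (ε / (‖a‖ + 1)) (by positivity)
      refine ⟨K1, hK1, fun e he hone => ?_⟩
      have : M.smul e (a • x) - a • x = a • (M.smul e x - x) := by
        rw [map_smul, smul_sub]
      rw [this, norm_smul]
      calc ‖a‖ * ‖M.smul e x - x‖ ≤ ‖a‖ * (ε / (‖a‖ + 1)) :=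
            mul_le_mul_of_nonneg_left (h1 e he hone) (norm_nonneg _)
      _ ≤ ε := by
          rw [mul_div_assoc', div_le_iff₀ (by positivity)]
          nlinarith [norm_nonneg a, hε.le]
  -- Step 2: approximate identity on every element.
  have step2 : ∀ ε > 0, ∃ e : C₀(Ω, 𝕜), ‖e‖ ≤ 1 ∧ ‖M.smul e s - s‖ ≤ ε := by
    intro ε hε
    obtain ⟨s', hs'mem, hs'close⟩ := Metric.mem_closure_iff.mp (hM s) (ε / 3) (by positivity)
    obtain ⟨Kc, hKc, hKe⟩ := step1 s' hs'mem (ε / 3) (by positivity)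
    obtain ⟨e, he1, heone⟩ := exists_c0_one_on_compact (𝕜 := 𝕜) hKc
    refine ⟨e, he1, ?_⟩
    have hd : ‖s - s'‖ ≤ ε / 3 := by
      rw [← dist_eq_norm]; exact hs'close.le
    have h1 : ‖M.smul e (s - s')‖ ≤ ε / 3 := by
      calc ‖M.smul e (s - s')‖ ≤ ‖e‖ * ‖s - s'‖ := M.norm_smul_le _ _
      _ ≤ 1 * (ε / 3) := mul_le_mul he1 hd (norm_nonneg _) zero_le_one
      _ = ε / 3 := one_mul _
    have h2 : ‖M.smul e s' - s'‖ ≤ ε / 3 := hKe e he1 heone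
    have : M.smul e s - s = M.smul e (s - s') + (M.smul e s' - s') + (s' - s) := by
      rw [map_sub]; abel
    rw [this]
    calc ‖M.smul e (s - s') + (M.smul e s' - s') + (s' - s)‖
        ≤ ‖M.smul e (s - s')‖ + ‖M.smul e s' - s'‖ + ‖s' - s‖ := norm_add₃_le
    _ ≤ ε / 3 + ε / 3 + ε / 3 := by
        refine add_le_add (add_le_add h1 h2) ?_
        rw [norm_sub_rev]; exact hd
    _ = ε := by ring
  -- Step 3: conclusion.
  have key : ∀ e : C₀(Ω, 𝕜), ‖e‖ ≤ 1 →
      M.smul g (M.smul e s) + c • M.smul e s = M.smul (g * e + c • e) s ∧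
      ‖g * e + c • e‖ ≤ ‖f‖ := by
    intro e he
    constructor
    · rw [map_add M.smul, ContinuousLinearMap.add_apply, M.mul_smul, map_smul M.smul,
        ContinuousLinearMap.smul_apply]
    · apply c0_norm_le_of_forall (norm_nonneg f)
      intro x
      have hval : (g * e + c • e) x = f (x : OnePoint Ω) * e x := by
        simp only [ZeroAtInftyContinuousMap.coe_add, ZeroAtInftyContinuousMap.coe_mul,
          ZeroAtInftyContinuousMap.coe_smul, Pi.add_apply, Pi.mul_apply, Pi.smul_apply,
          smul_eq_mul, hg x]
        ring
      rw [hval]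
      calc ‖f (x : OnePoint Ω) * e x‖ = ‖f (x : OnePoint Ω)‖ * ‖e x‖ := norm_mul _ _
      _ ≤ ‖f‖ * 1 := by
          apply mul_le_mul (f.norm_coe_le_norm _) ((c0_norm_apply_le e x).trans he)
            (norm_nonneg _) (norm_nonneg _)
      _ = ‖f‖ := mul_one _
  refine le_of_forall_pos_le_add fun δ hδ => ?_
  set C : ℝ := ‖g‖ + ‖c‖ with hC
  have hCpos : 0 < C + 1 := by positivity
  obtain ⟨e, he1, hes⟩ := step2 (δ / (C + 1)) (by positivity)
  obtain ⟨heq, hnrm⟩ := key e he1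
  set u : Γ := M.smul e s with hu
  have split : M.smul g s + c • s =
      (M.smul g (s - u) + c • (s - u)) + (M.smul g u + c • u) := by
    rw [map_sub, smul_sub]; abel
  have bound1 : ‖M.smul g (s - u) + c • (s - u)‖ ≤ C * (δ / (C + 1)) := by
    have hsu : ‖s - u‖ ≤ δ / (C + 1) := by
      rw [norm_sub_rev]; exact hes
    calc ‖M.smul g (s - u) + c • (s - u)‖ ≤ ‖M.smul g (s - u)‖ + ‖c • (s - u)‖ := norm_add_le _ _
    _ ≤ ‖g‖ * ‖s - u‖ + ‖c‖ * ‖s - u‖ := by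
        refine add_le_add (M.norm_smul_le _ _) ?_
        rw [norm_smul]
    _ = C * ‖s - u‖ := by ring
    _ ≤ C * (δ / (C + 1)) := by
        apply mul_le_mul_of_nonneg_left hsu (by positivity)
  have bound2 : ‖M.smul g u + c • u‖ ≤ ‖f‖ * ‖s‖ := by
    rw [heq]
    calc ‖M.smul (g * e + c • e) s‖ ≤ ‖g * e + c • e‖ * ‖s‖ := M.norm_smul_le _ _
    _ ≤ ‖f‖ * ‖s‖ := mul_le_mul_of_nonneg_right hnrm (norm_nonneg _)
  calc ‖M.smul g s + c • s‖
      ≤ ‖M.smul g (s - u) + c • (s - u)‖ + ‖M.smul g u + c • u‖ := by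
        rw [split]; exact norm_add_le _ _
  _ ≤ C * (δ / (C + 1)) + ‖f‖ * ‖s‖ := add_le_add bound1 bound2
  _ ≤ ‖f‖ * ‖s‖ + δ := by
      have : C * (δ / (C + 1)) ≤ δ := by
        rw [mul_div_assoc', div_le_iff₀ hCpos]
        nlinarith [norm_nonneg g, norm_nonneg c, hδ.le]
      linarith

end
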